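/- Consider a two-layer linear network with parameters (U,V) ∈ ℝ^{m×h} × ℝ^{h×n} and loss L(U,V) depending only on the product UV. Under gradient flow U' = -∂L/∂U, V' = -∂L/∂V, every entry of the matrix VVᵀ - UᵀU is conserved, i.e., d/dt(V(t)V(t)ᵀ - U(t)ᵀU(t)) = 0. -/

import Mathlib

open Matrix

attribute [local instance] Matrix.frobeniusNormedAddCommGroup Matrix.frobeniusNormedSpace

private lemma matmul_isBoundedBilinearMap (a b c : ℕ) :
    IsBoundedBilinearMap ℝ
      (fun p : Matrix (Fin a) (Fin b) ℝ × Matrix (Fin b) (Fin c) ℝ => p.1 * p.2) where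
  add_left := fun A A' B => Matrix.add_mul A A' B
  smul_left := fun r A B => Matrix.smul_mul r A B
  add_right := fun A B B' => Matrix.mul_add A B B'
  smul_right := fun r A B => by simp [Matrix.mul_smul]
  bound := ⟨1, one_pos, fun A B => by
    rw [one_mul]; exact Matrix.frobenius_norm_mul A B⟩

private lemma hasDerivAt_matmul {a b c : ℕ}
    {f : ℝ → Matrix (Fin a) (Fin b) ℝ} {g : ℝ → Matrix (Fin b) (Fin c) ℝ}
    {f' : Matrix (Fin a) (Fin b) ℝ} {g' : Matrix (Fin b) (Fin c) ℝ} {t : ℝ}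
    (hf : HasDerivAt f f' t) (hg : HasDerivAt g g' t) :
    HasDerivAt (fun t => f t * g t) (f' * g t + f t * g') t := by
  have hB := (matmul_isBoundedBilinearMap a b c).hasFDerivAt (f t, g t)
  have := hB.comp_hasDerivAt t (hf.prodMk hg)
  simp [IsBoundedBilinearMap.deriv_apply, add_comm] at this; exact this

private noncomputable def transposeCLM (a b : ℕ) :
    Matrix (Fin a) (Fin b) ℝ →L[ℝ] Matrix (Fin b) (Fin a) ℝ :=
  LinearMap.mkContinuous
    { toFun := Matrix.transpose
      map_add' := fun A B => Matrix.transpose_add A B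
      map_smul' := fun r A => Matrix.transpose_smul r A } 1
    (fun A => by rw [one_mul]; exact le_of_eq (Matrix.frobenius_norm_transpose A))

private lemma hasDerivAt_transpose {a b : ℕ}
    {f : ℝ → Matrix (Fin a) (Fin b) ℝ} {f' : Matrix (Fin a) (Fin b) ℝ} {t : ℝ}
    (hf : HasDerivAt f f' t) :
    HasDerivAt (fun t => (f t)ᵀ) f'ᵀ t := by
  have := (transposeCLM a b).hasFDerivAt.comp_hasDerivAt t hf
  exact this

/-- Two-layer linear network: the loss is `L(U,V) = ℓ(UV)`, so the gradient flow reads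
`U' = -∇ℓ(UV)·Vᵀ` and `V' = -Uᵀ·∇ℓ(UV)` (here `G t = ∇ℓ(U(t)V(t))`). Then the matrix
`V Vᵀ - Uᵀ U` is conserved: its derivative along the flow is `0` (every entry is
conserved). -/
theorem imbalance_conserved_linear_network
    {m h n : ℕ}
    (U : ℝ → Matrix (Fin m) (Fin h) ℝ) (V : ℝ → Matrix (Fin h) (Fin n) ℝ)
    (G : ℝ → Matrix (Fin m) (Fin n) ℝ)
    (hU : ∀ t : ℝ, HasDerivAt U (-(G t * (V t)ᵀ)) t)
    (hV : ∀ t : ℝ, HasDerivAt V (-((U t)ᵀ * G t)) t)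
    (t : ℝ) :
    HasDerivAt (fun t => V t * (V t)ᵀ - (U t)ᵀ * U t) 0 t := by
  have h1 : HasDerivAt (fun t => V t * (V t)ᵀ)
      (-((U t)ᵀ * G t) * (V t)ᵀ + V t * (-((U t)ᵀ * G t))ᵀ) t :=
    hasDerivAt_matmul (hV t) (hasDerivAt_transpose (hV t))
  have h2 : HasDerivAt (fun t => (U t)ᵀ * U t)
      ((-(G t * (V t)ᵀ))ᵀ * U t + (U t)ᵀ * (-(G t * (V t)ᵀ))) t :=
    hasDerivAt_matmul (hasDerivAt_transpose (hU t)) (hU t)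
  have h3 := h1.sub h2
  have heq : (-((U t)ᵀ * G t) * (V t)ᵀ + V t * (-((U t)ᵀ * G t))ᵀ) -
      ((-(G t * (V t)ᵀ))ᵀ * U t + (U t)ᵀ * (-(G t * (V t)ᵀ))) = 0 := by
    simp [Matrix.transpose_mul, Matrix.mul_assoc]
    abel
  rwa [heq] at h3
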